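/- Let H be a real Hilbert space, T : H → H nonexpansive, and N ∈ ℕ∖{0} such that N ≥ 2‖p‖ for some p ∈ Fix T. Then for every k ∈ ℕ and every monotone function f : ℕ → ℕ there exist n ≤ 24N(f̌^{(R)}(0)+1)² and x ∈ B_N such that ‖T(x) − x‖ ≤ 1/(f(n)+1) and for all y ∈ B_N, if ‖T(y) − y‖ ≤ 1/(n+1) then ⟪x, x − y⟫ ≤ 1/(k+1); here R := 4N⁴(k+1)², f̌(m) := max{f(24N(m+1)²), 24N(m+1)²}, and f̌^{(R)} denotes the R-fold composition of f̌ with itself. -/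

import Mathlib

/-- `f̌(m) := max{f(24N(m+1)²), 24N(m+1)²}`. -/
def fcheck (N : ℕ) (f : ℕ → ℕ) (m : ℕ) : ℕ :=
  max (f (24 * N * (m + 1) ^ 2)) (24 * N * (m + 1) ^ 2)

section aux
variable {H : Type*} [NormedAddCommGroup H] [InnerProductSpace ℝ H]

lemma norm_combo_sq (u v : H) (a b : ℝ) :
    ‖a•u + b•v‖^2 = a^2*‖u‖^2 + 2*a*b*(inner ℝ u v : ℝ) + b^2*‖v‖^2 := by
  rw [norm_add_sq_real, real_inner_smul_left, real_inner_smul_right, norm_smul, norm_smul]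
  simp [mul_pow, sq_abs]
  ring

lemma norm_lineseg_sq (w x y : H) (t : ℝ) :
    ‖w - (x + t•(y - x))‖^2
      = (1-t)*‖w-x‖^2 + t*‖w-y‖^2 - t*(1-t)*‖x-y‖^2 := by
  have h1 : w - (x + t•(y-x)) = (1-t)•(w-x) + t•(w-y) := by module
  have h3 : ‖x-y‖^2 = ‖w-y‖^2 - 2*(inner ℝ (w-x) (w-y) : ℝ) + ‖w-x‖^2 := by
    have h2 : x - y = (w - y) - (w - x) := by abel
    rw [h2, norm_sub_sq_real, real_inner_comm (w-y) (w-x)]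
  rw [h1, norm_combo_sq, h3]
  ring

lemma norm_sub_smul_sq (x w : H) (t : ℝ) :
    ‖x - t•w‖^2 = ‖x‖^2 - 2*t*(inner ℝ x w : ℝ) + t^2*‖w‖^2 := by
  rw [norm_sub_sq_real, real_inner_smul_right, norm_smul]
  simp [mul_pow, sq_abs]
  ring

end aux

lemma pigeon (g : ℕ → ℝ) (L : ℕ) (hL : 0 < L) :
    ∃ i < L, g (i+1) - g i ≤ (g L - g 0)/L := by
  by_contra h
  push_neg at h
  have hsum : ∑ i ∈ Finset.range L, (g (i+1) - g i) = g L - g 0 := Finset.sum_range_sub g L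
  have hlt : (L : ℝ) * ((g L - g 0)/L) < ∑ i ∈ Finset.range L, (g (i+1) - g i) := by
    calc (L:ℝ) * ((g L - g 0)/L) = ∑ _i ∈ Finset.range L, (g L - g 0)/L := by
          simp [Finset.sum_const, mul_comm]
      _ < _ := Finset.sum_lt_sum_of_nonempty (by simp [Finset.nonempty_range_iff, hL.ne'])
                 (fun i hi => h i (Finset.mem_range.mp hi))
  rw [hsum, mul_div_cancel₀ _ (by exact_mod_cast hL.ne' : (L:ℝ) ≠ 0)] at hlt
  exact lt_irrefl _ hlt

set_option maxHeartbeats 2000000 in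
/-- quantitative weak form of the projection argument. -/
theorem quantitative_projection
    {H : Type*} [NormedAddCommGroup H] [InnerProductSpace ℝ H] [CompleteSpace H]
    (T : H → H) (hT : ∀ a b : H, ‖T a - T b‖ ≤ ‖a - b‖)
    (p : H) (hp : T p = p)
    (N : ℕ) (hN : 0 < N) (hNp : 2 * ‖p‖ ≤ (N : ℝ))
    (k : ℕ) (f : ℕ → ℕ) (hf : Monotone f) :
    ∃ n ≤ 24 * N * ((fcheck N f)^[4 * N ^ 4 * (k + 1) ^ 2] 0 + 1) ^ 2,
      ∃ x : H, ‖x - p‖ ≤ (N : ℝ) ∧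
        ‖T x - x‖ ≤ 1 / (f n + 1) ∧
        ∀ y : H, ‖y - p‖ ≤ (N : ℝ) → ‖T y - y‖ ≤ 1 / (n + 1) →
          (inner ℝ x (x - y) : ℝ) ≤ 1 / (k + 1) := by
  classical
  have hN1 : (1:ℝ) ≤ (N:ℝ) := by exact_mod_cast hN
  have hK1 : (1:ℝ) ≤ (k:ℝ) + 1 := by
    have : (0:ℝ) ≤ (k:ℝ) := Nat.cast_nonneg k
    linarith
  -- the iterates
  set m : ℕ → ℕ := fun j => (fcheck N f)^[j] 0 with hmdef
  have hmsucc : ∀ j, m (j+1) = fcheck N f (m j) := fun j =>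
    Function.iterate_succ_apply' (fcheck N f) j 0
  have hgrow : ∀ a : ℕ, a + 1 ≤ 24*N*(a+1)^2 := by
    intro a
    calc a + 1 ≤ (a+1)^2 := Nat.le_self_pow two_ne_zero _
      _ ≤ 24*N*(a+1)^2 := Nat.le_mul_of_pos_left _ (by positivity)
  have hstep : ∀ a : ℕ, 24*N*(a+1)^2 ≤ fcheck N f a := fun a => le_max_right _ _
  have hmono : Monotone m := by
    apply monotone_nat_of_le_succ
    intro j
    rw [hmsucc]
    exact le_trans (by omega : m j ≤ m j + 1) ((hgrow (m j)).trans (hstep (m j)))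
  -- levels and sets
  set lvl : ℕ → ℕ := fun j => 24*N*(m j + 1)^2 with hlvldef
  have hlvlmono : Monotone lvl := by
    intro a b hab
    have h := hmono hab
    simp only [hlvldef]
    gcongr <;> omega
  set A : ℕ → Set H := fun j =>
    {y | ‖y - p‖ ≤ (N:ℝ) ∧ ‖T y - y‖ ≤ 1/((lvl j : ℝ)+1)} with hAdef
  have hpA : ∀ j, p ∈ A j := by
    intro j
    constructor
    · simp only [sub_self, norm_zero]; positivity
    · rw [hp]; simp only [sub_self, norm_zero]; positivity
  have hAanti : ∀ j j', j ≤ j' → A j' ⊆ A j := by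
    intro j j' hjj' y hy
    refine ⟨hy.1, hy.2.trans ?_⟩
    apply one_div_le_one_div_of_le (by positivity)
    have := hlvlmono hjj'
    exact_mod_cast add_le_add_left (Nat.cast_le.mpr this : ((lvl j : ℝ)) ≤ lvl j') 1
  set S : ℕ → Set ℝ := fun j => (fun y : H => ‖y‖^2) '' A j with hSdef
  have hSne : ∀ j, (S j).Nonempty := fun j => ⟨‖p‖^2, p, hpA j, rfl⟩
  have hSbdd : ∀ j, BddBelow (S j) := by
    intro j
    refine ⟨0, ?_⟩
    rintro r ⟨y, _, rfl⟩
    positivity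
  set b : ℕ → ℝ := fun j => sInf (S j) with hbdef
  have hb0 : ∀ j, 0 ≤ b j := by
    intro j
    apply le_csInf (hSne j)
    rintro r ⟨y, _, rfl⟩
    positivity
  have hbp : ∀ j, b j ≤ ‖p‖^2 := fun j => csInf_le (hSbdd j) ⟨p, hpA j, rfl⟩
  have hbmono : Monotone b := fun j j' hjj' =>
    csInf_le_csInf (hSbdd j) (hSne j') (Set.image_mono (hAanti j j' hjj'))
  clear_value m lvl A S b
  -- pigeonhole
  set L : ℕ := 2*N^4*(k+1)^2 with hLdef
  have hL : 0 < L := by positivity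
  obtain ⟨i, hiL, hpig⟩ := pigeon (fun i => b (2*i)) L hL
  set η : ℝ := 1/(8*(N:ℝ)^2*((k:ℝ)+1)^2) with hηdef
  have hη : 0 < η := by positivity
  clear_value η
  have hdiv : (b (2*L) - b 0)/L ≤ η := by
    rw [div_le_iff₀ (by exact_mod_cast hL : (0:ℝ) < L)]
    have hp2 : ‖p‖^2 ≤ (N:ℝ)^2/4 := by nlinarith [norm_nonneg p]
    have hηL : η * (L:ℝ) = (N:ℝ)^2/4 := by
      rw [hηdef, hLdef]
      push_cast
      field_simp
      ring
    rw [hηL]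
    have := hbp (2*L); have := hb0 0
    linarith
  set I : ℕ := 2*i with hIdef
  clear_value L I
  have hkey : b (I+2) ≤ b I + η := by
    have h2i : 2*(i+1) = I + 2 := by omega
    have := hpig.trans hdiv
    simp only [h2i] at this
    linarith
  -- choose x
  have hblt : sInf (S (I+2)) < b (I+2) + η := by
    rw [hbdef] at *
    exact lt_add_of_pos_right _ hη
  obtain ⟨r, hrS, hxlt⟩ := exists_lt_of_csInf_lt (hSne (I+2)) hblt
  rw [hSdef] at hrS
  obtain ⟨x, hxA, rfl⟩ := hrS
  rw [hAdef] at hxA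
  have hxlt' : ‖x‖^2 < b (I+2) + η := hxlt
  have hxball : ‖x - p‖ ≤ (N:ℝ) := hxA.1
  -- the witness index
  refine ⟨lvl (I+1), ?_, x, hxball, ?_, ?_⟩
  · -- bound on the witness
    have h1 : I + 1 ≤ 4*N^4*(k+1)^2 := by
      have : 2*L = 4*N^4*(k+1)^2 := by rw [hLdef]; ring
      omega
    have hrfl : (fcheck N f)^[4*N^4*(k+1)^2] 0 = m (4*N^4*(k+1)^2) := by rw [hmdef]
    rw [hrfl]
    have h2 := hmono h1
    simp only [hlvldef]
    gcongr <;> omega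
  · -- approximate fixed point property of x
    have hfle : f (lvl (I+1)) ≤ lvl (I+2) := by
      have hl1 : lvl (I+1) = 24*N*(m (I+1)+1)^2 := by rw [hlvldef]
      have hl2 : lvl (I+2) = 24*N*(m (I+2)+1)^2 := by rw [hlvldef]
      have h1 : f (lvl (I+1)) ≤ fcheck N f (m (I+1)) := by
        rw [hl1]; exact le_max_left _ _
      have h2 : fcheck N f (m (I+1)) = m (I+2) := (hmsucc (I+1)).symm
      have h3 := hgrow (m (I+2))
      omega
    refine hxA.2.trans ?_
    apply one_div_le_one_div_of_le (by positivity)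
    have : ((f (lvl (I+1)) : ℝ)) ≤ (lvl (I+2) : ℝ) := by exact_mod_cast hfle
    linarith
  · -- the main variational inequality
    intro y hy1 hy2
    set t : ℝ := 1/(4*(N:ℝ)^2*((k:ℝ)+1)) with htdef
    have ht0 : 0 < t := by positivity
    have ht1 : t ≤ 1 := by
      rw [htdef, div_le_one (by positivity)]
      nlinarith
    set δ : ℝ := 1/((lvl (I+1) : ℝ)+1) with hδdef
    have hδ0 : 0 < δ := by positivity
    have hδ1 : δ ≤ 1 := by
      rw [hδdef, div_le_one (by positivity)]
      have : (0:ℝ) ≤ (lvl (I+1) : ℝ) := Nat.cast_nonneg _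
      linarith
    have hx2 : ‖T x - x‖ ≤ δ := by
      refine hxA.2.trans ?_
      rw [hδdef]
      apply one_div_le_one_div_of_le (by positivity)
      have := hlvlmono (by omega : I + 1 ≤ I + 2)
      exact_mod_cast add_le_add_left (Nat.cast_le.mpr this : ((lvl (I+1):ℝ)) ≤ lvl (I+2)) 1
    have hy2' : ‖T y - y‖ ≤ δ := hy2
    set z : H := x + t•(y - x) with hzdef
    set s : ℝ := ‖x - y‖ with hsdef
    clear_value t δ z s
    have hs0 : 0 ≤ s := hsdef ▸ norm_nonneg _
    have hs2N : s ≤ 2*(N:ℝ) := by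
      have hxy : x - y = (x - p) - (y - p) := by abel
      rw [hsdef, hxy]
      refine (norm_sub_le _ _).trans ?_
      linarith
    have hts : t*s ≤ 1/2 := by
      have h1 : t*s ≤ t*(2*(N:ℝ)) := mul_le_mul_of_nonneg_left hs2N ht0.le
      have h2 : t*(2*(N:ℝ)) ≤ 1/2 := by
        rw [htdef, div_mul_eq_mul_div, div_le_div_iff₀ (by positivity) (by norm_num)]
        nlinarith
      linarith
    have hzx : ‖z - x‖ = t*s := by
      have : z - x = t•(y-x) := by rw [hzdef]; abel
      rw [this, norm_smul, Real.norm_eq_abs, abs_of_pos ht0, norm_sub_rev, hsdef]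
    have hzy : ‖z - y‖ = (1-t)*s := by
      have h : z - y = (1-t)•(x-y) := by rw [hzdef]; module
      rw [h, norm_smul, Real.norm_eq_abs, abs_of_nonneg (by linarith : (0:ℝ) ≤ 1-t), hsdef]
    have hTzx : ‖T z - x‖ ≤ t*s + δ := by
      have h : T z - x = (T z - T x) + (T x - x) := by abel
      rw [h]
      refine (norm_add_le _ _).trans ?_
      exact add_le_add ((hT z x).trans_eq hzx) hx2
    have hTzy : ‖T z - y‖ ≤ (1-t)*s + δ := by
      have h : T z - y = (T z - T y) + (T y - y) := by abel
      rw [h]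
      refine (norm_add_le _ _).trans ?_
      exact add_le_add ((hT z y).trans_eq hzy) hy2'
    have hidz : ‖T z - z‖^2 = (1-t)*‖T z - x‖^2 + t*‖T z - y‖^2 - t*(1-t)*s^2 := by
      rw [hzdef, hsdef]
      exact norm_lineseg_sq (T (x + t•(y-x))) x y t
    have hTz2 : ‖T z - z‖^2 ≤ 3*δ := by
      have e1 : ‖T z - x‖^2 ≤ (t*s + δ)^2 := by
        have := norm_nonneg (T z - x); nlinarith
      have e2 : ‖T z - y‖^2 ≤ ((1-t)*s + δ)^2 := by
        have := norm_nonneg (T z - y); nlinarith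
      have expand : (1-t)*(t*s + δ)^2 + t*((1-t)*s + δ)^2 - t*(1-t)*s^2
          = 4*t*(1-t)*s*δ + δ^2 := by ring
      have h4 : t*(1-t)*s ≤ 1/2 := by nlinarith
      have h5 : 0 ≤ t*(1-t)*s := by
        have : 0 ≤ 1 - t := by linarith
        positivity
      nlinarith [hidz, e1, e2]
    -- z is in the coarse approximate fixed point set
    have hnat : 3*(lvl I + 1)^2 ≤ lvl (I+1) + 1 := by
      have hB : lvl I + 1 ≤ m (I+1) + 1 := by
        have h1 := hstep (m I)
        have h2 := hmsucc I
        simp only [hlvldef]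
        omega
      have h3 : 3 ≤ 24*N := by omega
      calc 3*(lvl I + 1)^2 ≤ (24*N)*(lvl I + 1)^2 := Nat.mul_le_mul_right _ h3
        _ ≤ (24*N)*(m (I+1) + 1)^2 := by gcongr
        _ ≤ lvl (I+1) + 1 := by simp only [hlvldef]; omega
    have hc : ‖T z - z‖ ≤ 1/((lvl I : ℝ)+1) := by
      have hcast : 3*((lvl I : ℝ) + 1)^2 ≤ (lvl (I+1) : ℝ) + 1 := by exact_mod_cast hnat
      have h3δ : 3*δ ≤ (1/((lvl I : ℝ)+1))^2 := by
        rw [hδdef, div_pow, one_pow, mul_one_div,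
          div_le_div_iff₀ (by positivity) (by positivity)]
        linarith [hcast]
      have hpos : (0:ℝ) < 1/((lvl I : ℝ)+1) := by positivity
      have h := Real.sqrt_le_sqrt (hTz2.trans h3δ)
      rwa [Real.sqrt_sq (norm_nonneg _), Real.sqrt_sq hpos.le] at h
    have hzball : ‖z - p‖ ≤ (N:ℝ) := by
      have h : z - p = (1-t)•(x-p) + t•(y-p) := by rw [hzdef]; module
      rw [h]
      refine (norm_add_le _ _).trans ?_
      rw [norm_smul, norm_smul, Real.norm_eq_abs, Real.norm_eq_abs,
        abs_of_nonneg (by linarith : (0:ℝ) ≤ 1-t), abs_of_pos ht0]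
      have e1 : (1-t)*‖x-p‖ ≤ (1-t)*(N:ℝ) :=
        mul_le_mul_of_nonneg_left hxball (by linarith)
      have e2 : t*‖y-p‖ ≤ t*(N:ℝ) := mul_le_mul_of_nonneg_left hy1 ht0.le
      linarith
    have hzA : z ∈ A I := by rw [hAdef]; exact ⟨hzball, hc⟩
    have hmemz : ‖z‖^2 ∈ S I := by rw [hSdef]; exact ⟨z, hzA, rfl⟩
    have hbIz : b I ≤ ‖z‖^2 := by rw [hbdef]; exact csInf_le (hSbdd I) hmemz
    have hzid : ‖z‖^2 = ‖x‖^2 - 2*t*(inner ℝ x (x-y) : ℝ) + t^2*s^2 := by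
      have h : z = x - t•(x-y) := by rw [hzdef]; module
      rw [h, hsdef]
      exact norm_sub_smul_sq x (x-y) t
    -- the chain of inequalities
    have hchain : 2*t*(inner ℝ x (x-y) : ℝ) < t^2*s^2 + 2*η := by
      have h1 : ‖x‖^2 < b I + 2*η := by linarith only [hxlt', hkey]
      linarith only [h1, hbIz, hzid]
    have h2 : t^2*s^2 ≤ t^2*(2*(N:ℝ))^2 := by
      have hsq : s^2 ≤ (2*(N:ℝ))^2 := pow_le_pow_left₀ hs0 hs2N 2
      exact mul_le_mul_of_nonneg_left hsq (sq_nonneg t)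
    have hfin : 2*t*(2*t*(N:ℝ)^2 + η/t) = t^2*(2*(N:ℝ))^2 + 2*η := by
      field_simp
    have hip : (inner ℝ x (x-y) : ℝ) ≤ 2*t*(N:ℝ)^2 + η/t := by
      have h3 : 2*t*(inner ℝ x (x-y) : ℝ) ≤ 2*t*(2*t*(N:ℝ)^2 + η/t) := by
        rw [hfin]; linarith only [hchain, h2]
      exact le_of_mul_le_mul_left (by linarith only [h3]) (by positivity : (0:ℝ) < 2*t)
    have hval : 2*t*(N:ℝ)^2 + η/t = 1/((k:ℝ)+1) := by
      rw [htdef, hηdef]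
      field_simp
      ring
    rw [hval] at hip
    exact hip.trans_eq (by norm_num)
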